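/- (Saturation of solutions: support inclusion.) Let m ∈ M(𝕋) and let η : 𝕋 → ℝ be continuous with ‖η‖_∞ ≤ 1 and ∫ η dm = ‖m‖_TV. Then the Jordan positive part m⁺ is concentrated on the set { t ∈ 𝕋 : η(t) = 1 } (that is, m⁺ of the complement of this set is 0) and the Jordan negative part m⁻ is concentrated on { t ∈ 𝕋 : η(t) = −1 }. In particular the signed support of m is contained in the signed saturation set of η. -/

import Mathlib

open MeasureTheory

/-- Total variation norm of a finite signed measure: `‖m‖_TV = m⁺(univ) + m⁻(univ)`. -/
noncomputable def tvNorm {X : Type*} [MeasurableSpace X] (m : SignedMeasure X) : ℝ :=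
  (m.totalVariation Set.univ).toReal

/-- Pairing of a function with a signed measure: `∫ η dm = ∫ η dm⁺ − ∫ η dm⁻`. -/
noncomputable def pairing {X : Type*} [MeasurableSpace X]
    (η : X → ℝ) (m : SignedMeasure X) : ℝ :=
  (∫ x, η x ∂m.toJordanDecomposition.posPart) - ∫ x, η x ∂m.toJordanDecomposition.negPart

/-- Supremum norm `‖η‖_∞ = sup_t |η t|`. -/
noncomputable def supNorm {X : Type*} (η : X → ℝ) : ℝ :=
  sSup (Set.range fun t => |η t|)

/-- **saturation of solutions: support inclusion.** Let `m ∈ M(𝕋)` and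
let `η : 𝕋 → ℝ` be continuous with `‖η‖_∞ ≤ 1` and `∫ η dm = ‖m‖_TV`.  Then the Jordan
positive part `m⁺` is concentrated on `{η = 1}` and the negative part `m⁻` is
concentrated on `{η = −1}`. -/
theorem jordan_parts_concentrated_on_saturation (T : ℝ) [Fact (0 < T)]
    (m : SignedMeasure (AddCircle T)) (η : AddCircle T → ℝ) (hη : Continuous η)
    (hηnorm : supNorm η ≤ 1) (hcert : pairing η m = tvNorm m) :
    m.toJordanDecomposition.posPart {t | η t = 1}ᶜ = 0
      ∧ m.toJordanDecomposition.negPart {t | η t = -1}ᶜ = 0 := by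
  set μ := m.toJordanDecomposition.posPart with hμdef
  set ν := m.toJordanDecomposition.negPart with hνdef
  have hbdd : BddAbove (Set.range fun t => |η t|) :=
    (isCompact_range hη.abs).bddAbove
  have hbound : ∀ t, |η t| ≤ 1 := fun t =>
    le_trans (le_csSup hbdd ⟨t, rfl⟩) hηnorm
  have hμint : Integrable η μ := hη.integrable_of_hasCompactSupport (HasCompactSupport.of_compactSpace η)
  have hνint : Integrable η ν := hη.integrable_of_hasCompactSupport (HasCompactSupport.of_compactSpace η)
  have h1 : ∫ x, η x ∂μ ≤ (μ Set.univ).toReal := by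
    calc ∫ x, η x ∂μ ≤ ∫ _x, (1:ℝ) ∂μ :=
          integral_mono hμint (integrable_const 1) fun t => (abs_le.1 (hbound t)).2
      _ = (μ Set.univ).toReal := by simp [Measure.real]
  have h2 : -(ν Set.univ).toReal ≤ ∫ x, η x ∂ν := by
    calc -(ν Set.univ).toReal = ∫ _x, (-1:ℝ) ∂ν := by simp [Measure.real]
      _ ≤ ∫ x, η x ∂ν :=
          integral_mono (integrable_const (-1)) hνint fun t => (abs_le.1 (hbound t)).1
  have htv : tvNorm m = (μ Set.univ).toReal + (ν Set.univ).toReal := by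
    rw [tvNorm, SignedMeasure.totalVariation, Measure.coe_add, Pi.add_apply,
      ENNReal.toReal_add (measure_ne_top _ _) (measure_ne_top _ _)]
  rw [pairing, htv] at hcert
  have heq1 : ∫ x, η x ∂μ = (μ Set.univ).toReal := by linarith
  have heq2 : ∫ x, η x ∂ν = -(ν Set.univ).toReal := by linarith
  constructor
  · have hzero : ∫ x, (1 - η x) ∂μ = 0 := by
      rw [integral_sub (integrable_const 1) hμint, heq1]; simp [Measure.real]
    have hae : (fun x => 1 - η x) =ᵐ[μ] 0 :=
      (integral_eq_zero_iff_of_nonneg (fun t => sub_nonneg.2 (abs_le.1 (hbound t)).2)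
        ((integrable_const 1).sub hμint)).1 hzero
    have := hae
    rw [Filter.EventuallyEq, Filter.eventually_iff, mem_ae_iff] at this
    convert this using 2
    ext t
    simp only [Set.mem_compl_iff, Set.mem_setOf_eq, Pi.zero_apply]
    constructor
    · intro h h'; exact h (by linarith)
    · intro h h'; exact h (by linarith)
  · have hzero : ∫ x, (1 + η x) ∂ν = 0 := by
      rw [integral_add (integrable_const 1) hνint, heq2]; simp [Measure.real]
    have hae : (fun x => 1 + η x) =ᵐ[ν] 0 :=
      (integral_eq_zero_iff_of_nonneg (fun t => by have h := (abs_le.1 (hbound t)).1; show (0:ℝ) ≤ 1 + η t; linarith)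
        ((integrable_const 1).add hνint)).1 hzero
    have := hae
    rw [Filter.EventuallyEq, Filter.eventually_iff, mem_ae_iff] at this
    convert this using 2
    ext t
    simp only [Set.mem_compl_iff, Set.mem_setOf_eq, Pi.zero_apply]
    constructor
    · intro h h'; exact h (by linarith)
    · intro h h'; exact h (by linarith)
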